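/- Let O = {r ⊑ s, r ⊑ s'}, C₀ = ∃r.⊤, Σ = {s, s'}, and n ≥ 2. Then every (Σ,n)-uniform interpolant U of C₀ under O has size at least Tower(n−2), where Tower(0)=1 and Tower(k+1)=2^Tower(k). -/

import Mathlib

namespace DL

/-- ALCQ concepts over concept names `Cn` and role names `Rn`. -/
inductive Concept (Cn Rn : Type) : Type
  | top : Concept Cn Rn
  | atom : Cn → Concept Cn Rn
  | neg : Concept Cn Rn → Concept Cn Rn
  | conj : Concept Cn Rn → Concept Cn Rn → Concept Cn Rn
  | atLeast : ℕ → Rn → Concept Cn Rn → Concept Cn Rn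
  deriving DecidableEq

namespace Concept
variable {Cn Rn : Type}

/-- ∃r.C -/
def ex (r : Rn) (c : Concept Cn Rn) : Concept Cn Rn := atLeast 1 r c
/-- ∀r.C -/
def all (r : Rn) (c : Concept Cn Rn) : Concept Cn Rn := neg (atLeast 1 r (neg c))
def disj (c d : Concept Cn Rn) : Concept Cn Rn := neg (conj (neg c) (neg d))
def impl (c d : Concept Cn Rn) : Concept Cn Rn := disj (neg c) d
def bot : Concept Cn Rn := neg top

/-- an ALC concept: all number restrictions are existential restrictions. -/
def isALC : Concept Cn Rn → Prop
  | top => True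
  | atom _ => True
  | neg c => c.isALC
  | conj c d => c.isALC ∧ d.isALC
  | atLeast n _ c => n = 1 ∧ c.isALC

/-- size (number of symbols) of a concept. -/
def size : Concept Cn Rn → ℕ
  | top => 1
  | atom _ => 1
  | neg c => c.size + 1
  | conj c d => c.size + d.size + 1
  | atLeast n _ c => c.size + n + 2

/-- role depth of a concept. -/
def roleDepth : Concept Cn Rn → ℕ
  | top => 0
  | atom _ => 0
  | neg c => c.roleDepth
  | conj c d => max c.roleDepth d.roleDepth
  | atLeast _ _ c => c.roleDepth + 1

end Concept

/-- big conjunction of a list of concepts -/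
def bigConj {Cn Rn : Type} : List (Concept Cn Rn) → Concept Cn Rn
  | [] => Concept.top
  | c :: l => Concept.conj c (bigConj l)

/-- big disjunction of a list of concepts -/
def bigDisj {Cn Rn : Type} (l : List (Concept Cn Rn)) : Concept Cn Rn :=
  Concept.neg (bigConj (l.map Concept.neg))

/-- a signature: a set of concept names and a set of role names. -/
structure Sig (Cn Rn : Type) where
  cs : Set Cn
  rs : Set Rn

/-- the concept uses only symbols from the signature σ. -/
def Concept.inSig {Cn Rn : Type} (σ : Sig Cn Rn) : Concept Cn Rn → Prop
  | .top => True
  | .atom A => A ∈ σ.cs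
  | .neg c => c.inSig σ
  | .conj c d => c.inSig σ ∧ d.inSig σ
  | .atLeast _ r c => r ∈ σ.rs ∧ c.inSig σ

/-- an interpretation I = (Δ^I, ·^I). -/
structure Interp (Cn Rn : Type) : Type 1 where
  Dom : Type
  atomI : Cn → Set Dom
  roleI : Rn → Set (Dom × Dom)

/-- extension C^I of a concept in an interpretation. -/
def Concept.sem {Cn Rn : Type} (I : Interp Cn Rn) : Concept Cn Rn → Set I.Dom
  | .top => Set.univ
  | .atom A => I.atomI A
  | .neg c => (c.sem I)ᶜ
  | .conj c d => c.sem I ∩ d.sem I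
  | .atLeast n r c =>
      {x | ∃ s : Finset I.Dom, n ≤ s.card ∧ ∀ e ∈ s, (x, e) ∈ I.roleI r ∧ e ∈ c.sem I}

/-- an ontology: concept inclusions and role inclusions. -/
structure Ontology (Cn Rn : Type) where
  cis : Set (Concept Cn Rn × Concept Cn Rn)
  ris : Set (Rn × Rn)

def Interp.isModel {Cn Rn : Type} (I : Interp Cn Rn) (O : Ontology Cn Rn) : Prop :=
  (∀ p ∈ O.cis, Concept.sem I p.1 ⊆ Concept.sem I p.2) ∧
  (∀ p ∈ O.ris, I.roleI p.1 ⊆ I.roleI p.2)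

/-- O ⊨ c ⊑ d -/
def entails {Cn Rn : Type} (O : Ontology Cn Rn) (c d : Concept Cn Rn) : Prop :=
  ∀ I : Interp Cn Rn, I.isModel O → c.sem I ⊆ d.sem I

/-- O ⊨ r ⊑ s for role names -/
def roleEnt {Cn Rn : Type} (O : Ontology Cn Rn) (r s : Rn) : Prop :=
  ∀ I : Interp Cn Rn, I.isModel O → I.roleI r ⊆ I.roleI s

/-- Z is a Σ-bisimulation between I and J. -/
def IsBisim {Cn Rn : Type} (σ : Sig Cn Rn) (I J : Interp Cn Rn)
    (Z : Set (I.Dom × J.Dom)) : Prop :=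
  ∀ d e, (d, e) ∈ Z →
    (∀ A ∈ σ.cs, d ∈ I.atomI A ↔ e ∈ J.atomI A) ∧
    (∀ r ∈ σ.rs, ∀ d', (d, d') ∈ I.roleI r → ∃ e', (e, e') ∈ J.roleI r ∧ (d', e') ∈ Z) ∧
    (∀ r ∈ σ.rs, ∀ e', (e, e') ∈ J.roleI r → ∃ d', (d, d') ∈ I.roleI r ∧ (d', e') ∈ Z)

/-- pointed interpretations are Σ-bisimilar. -/
def Bisimilar {Cn Rn : Type} (σ : Sig Cn Rn) (I : Interp Cn Rn) (d : I.Dom)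
    (J : Interp Cn Rn) (e : J.Dom) : Prop :=
  ∃ Z, IsBisim σ I J Z ∧ (d, e) ∈ Z

/-- E is an ALC(Σ) interpolant for O ⊨ c ⊑ d. -/
def IsInterpolant {Cn Rn : Type} (O : Ontology Cn Rn) (σ : Sig Cn Rn)
    (c d E : Concept Cn Rn) : Prop :=
  E.isALC ∧ E.inSig σ ∧ entails O c E ∧ entails O E d

/-- c and d are jointly ∼_{ALC,Σ}-consistent under O. -/
def JointlyConsistent {Cn Rn : Type} (O : Ontology Cn Rn) (σ : Sig Cn Rn)
    (c d : Concept Cn Rn) : Prop :=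
  ∃ (I₁ I₂ : Interp Cn Rn) (d₁ : I₁.Dom) (d₂ : I₂.Dom),
    I₁.isModel O ∧ I₂.isModel O ∧ d₁ ∈ c.sem I₁ ∧ d₂ ∈ d.sem I₂ ∧ Bisimilar σ I₁ d₁ I₂ d₂

/-- semantics of a set of concepts viewed as conjunction. -/
def setSem {Cn Rn : Type} (I : Interp Cn Rn) (t : Set (Concept Cn Rn)) : Set I.Dom :=
  {x | ∀ c ∈ t, x ∈ c.sem I}

/-- the type of an element: concepts from sub true at x. -/
def tpSet {Cn Rn : Type} (I : Interp Cn Rn) (sub : Set (Concept Cn Rn)) (x : I.Dom) :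
    Set (Concept Cn Rn) :=
  {c | c ∈ sub ∧ x ∈ c.sem I}

/-- t is a type for O (realizable subset of sub). -/
def IsTypeFor {Cn Rn : Type} (O : Ontology Cn Rn) (sub : Set (Concept Cn Rn))
    (t : Set (Concept Cn Rn)) : Prop :=
  ∃ (I : Interp Cn Rn) (x : I.Dom), I.isModel O ∧ t = tpSet I sub x

/-- t_{/r} = {C : ∀r.C ∈ t} -/
def slash {Cn Rn : Type} (t : Set (Concept Cn Rn)) (r : Rn) : Set (Concept Cn Rn) :=
  {c | Concept.all r c ∈ t}

/-- t ⤳_r t' -/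
def typeStep {Cn Rn : Type} (r : Rn) (t t' : Set (Concept Cn Rn)) : Prop :=
  slash t r ⊆ t'

/-- T ⤳_s T' for mosaics -/
def mosaicStep {Cn Rn : Type} (s : Rn) (T T' : Set (Set (Concept Cn Rn))) : Prop :=
  ∀ t ∈ T, ∃ t' ∈ T', typeStep s t t'

/-- O ⊨ t ⊑ D for a type t viewed as conjunction. -/
def entailsSet {Cn Rn : Type} (O : Ontology Cn Rn) (t : Set (Concept Cn Rn))
    (D : Concept Cn Rn) : Prop :=
  ∀ I : Interp Cn Rn, I.isModel O → setSem I t ⊆ D.sem I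

/-- iterated exponential -/
def Tower : ℕ → ℕ
  | 0 => 1
  | n + 1 => 2 ^ Tower n

/-- U is a (Σ,n)-uniform interpolant of c₀ under O. -/
def UniformInterpolant {Cn Rn : Type} (O : Ontology Cn Rn) (σ : Sig Cn Rn)
    (c₀ : Concept Cn Rn) (n : ℕ) (U : Concept Cn Rn) : Prop :=
  U.isALC ∧ U.inSig σ ∧ entails O c₀ U ∧
  ∀ E : Concept Cn Rn, E.isALC → E.inSig σ → E.roleDepth ≤ n →
    entails O c₀ E → entails O U E

/-- the ontology {r ⊑ s, r ⊑ s'} with r = 0, s = 1, s' = 2. -/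
def O11 : Ontology ℕ (Fin 3) := ⟨∅, {(0, 1), (0, 2)}⟩

/-- the signature Σ = {s, s'}. -/
def σ11 : Sig ℕ (Fin 3) := ⟨∅, {1, 2}⟩
section Aux
open Concept

variable {Cn Rn : Type}

lemma sem_ex {I : Interp Cn Rn} {r : Rn} {c : Concept Cn Rn} {x : I.Dom} :
    x ∈ (Concept.atLeast 1 r c).sem I ↔ ∃ y, (x, y) ∈ I.roleI r ∧ y ∈ c.sem I := by
  constructor
  · rintro ⟨S, hc, hS⟩
    obtain ⟨e, he⟩ := Finset.card_pos.mp hc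
    exact ⟨e, hS e he⟩
  · rintro ⟨y, hy, hc⟩
    exact ⟨{y}, by simp, by simpa using ⟨hy, hc⟩⟩

lemma sem_all {I : Interp Cn Rn} {r : Rn} {c : Concept Cn Rn} {x : I.Dom} :
    x ∈ (Concept.all r c).sem I ↔ ∀ y, (x, y) ∈ I.roleI r → y ∈ c.sem I := by
  unfold Concept.all
  show x ∉ (Concept.atLeast 1 r c.neg).sem I ↔ _
  rw [sem_ex]
  push_neg
  constructor
  · intro h y hy
    have := h y hy
    simp only [Concept.sem, Set.mem_compl_iff, not_not] at this
    exact this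
  · intro h y hy
    simp only [Concept.sem, Set.mem_compl_iff, not_not]
    exact h y hy

lemma sem_disj {I : Interp Cn Rn} {c d : Concept Cn Rn} {x : I.Dom} :
    x ∈ (Concept.disj c d).sem I ↔ x ∈ c.sem I ∨ x ∈ d.sem I := by
  unfold Concept.disj
  simp only [Concept.sem, Set.mem_compl_iff, Set.mem_inter_iff]
  tauto

lemma sem_bigConj {I : Interp Cn Rn} {l : List (Concept Cn Rn)} {x : I.Dom} :
    x ∈ (bigConj l).sem I ↔ ∀ c ∈ l, x ∈ c.sem I := by
  induction l with
  | nil => simp [bigConj, Concept.sem]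
  | cons c l ih =>
      show x ∈ c.sem I ∩ (bigConj l).sem I ↔ _
      rw [Set.mem_inter_iff, ih]
      simp

lemma sem_bigDisj {I : Interp Cn Rn} {l : List (Concept Cn Rn)} {x : I.Dom} :
    x ∈ (bigDisj l).sem I ↔ ∃ c ∈ l, x ∈ c.sem I := by
  unfold bigDisj
  show x ∉ (bigConj (l.map Concept.neg)).sem I ↔ _
  rw [sem_bigConj]
  push_neg
  constructor
  · rintro ⟨c, hc, h⟩
    obtain ⟨d, hd, rfl⟩ := List.mem_map.mp hc
    refine ⟨d, hd, ?_⟩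
    simp only [Concept.sem, Set.mem_compl_iff, not_not] at h
    exact h
  · rintro ⟨c, hc, h⟩
    refine ⟨Concept.neg c, List.mem_map.mpr ⟨c, hc, rfl⟩, ?_⟩
    simp only [Concept.sem, Set.mem_compl_iff, not_not]
    exact h

end Aux
section Aux2
variable {Cn Rn : Type} [DecidableEq Cn] [DecidableEq Rn]

/-- set of subconcepts -/
def subs : Concept Cn Rn → Finset (Concept Cn Rn)
  | .top => {Concept.top}
  | .atom A => {Concept.atom A}
  | .neg c => insert (Concept.neg c) (subs c)
  | .conj c d => insert (Concept.conj c d) (subs c ∪ subs d)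
  | .atLeast n r c => insert (Concept.atLeast n r c) (subs c)

lemma self_mem_subs (c : Concept Cn Rn) : c ∈ subs c := by
  cases c <;> simp [subs]

lemma card_subs_le (c : Concept Cn Rn) : (subs c).card ≤ c.size := by
  induction c with
  | top => simp [subs, Concept.size]
  | atom A => simp [subs, Concept.size]
  | neg c ih =>
      calc (subs (Concept.neg c)).card ≤ (subs c).card + 1 := Finset.card_insert_le _ _
        _ ≤ c.size + 1 := by omega
        _ = (Concept.neg c).size := rfl
  | conj c d ihc ihd =>
      calc (subs (Concept.conj c d)).card ≤ (subs c ∪ subs d).card + 1 :=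
            Finset.card_insert_le _ _
        _ ≤ (subs c).card + (subs d).card + 1 := by
            have := Finset.card_union_le (subs c) (subs d); omega
        _ ≤ c.size + d.size + 1 := by omega
        _ = (Concept.conj c d).size := rfl
  | atLeast n r c ih =>
      calc (subs (Concept.atLeast n r c)).card ≤ (subs c).card + 1 :=
            Finset.card_insert_le _ _
        _ ≤ c.size + 1 := by omega
        _ ≤ (Concept.atLeast n r c).size := by simp [Concept.size]; omega

lemma subs_trans {U : Concept Cn Rn} : ∀ d ∈ subs U, subs d ⊆ subs U := by
  induction U with
  | top => intro d hd; simp [subs] at hd; subst hd; simp [subs]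
  | atom A => intro d hd; simp [subs] at hd; subst hd; simp [subs]
  | neg c ih =>
      intro d hd
      rcases Finset.mem_insert.mp hd with h | h
      · subst h; exact fun x hx => hx
      · exact (ih d h).trans (Finset.subset_insert _ _)
  | conj c e ihc ihe =>
      intro d hd
      rcases Finset.mem_insert.mp hd with h | h
      · subst h; exact fun x hx => hx
      · rcases Finset.mem_union.mp h with h | h
        · exact (ihc d h).trans ((Finset.subset_union_left).trans (Finset.subset_insert _ _))
        · exact (ihe d h).trans ((Finset.subset_union_right).trans (Finset.subset_insert _ _))
  | atLeast n r c ih =>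
      intro d hd
      rcases Finset.mem_insert.mp hd with h | h
      · subst h; exact fun x hx => hx
      · exact (ih d h).trans (Finset.subset_insert _ _)

lemma mem_subs_neg {U c : Concept Cn Rn} (h : Concept.neg c ∈ subs U) : c ∈ subs U :=
  subs_trans _ h (by simp [subs, self_mem_subs])

lemma mem_subs_conj {U c d : Concept Cn Rn} (h : Concept.conj c d ∈ subs U) :
    c ∈ subs U ∧ d ∈ subs U :=
  ⟨subs_trans _ h (by simp [subs, Finset.mem_insert, Finset.mem_union, self_mem_subs]),
   subs_trans _ h (by simp [subs, Finset.mem_insert, Finset.mem_union, self_mem_subs])⟩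

lemma mem_subs_atLeast {U c : Concept Cn Rn} {m : ℕ} {r : Rn}
    (h : Concept.atLeast m r c ∈ subs U) : c ∈ subs U :=
  subs_trans _ h (by simp [subs, self_mem_subs])

lemma subs_isALC {U : Concept Cn Rn} (hU : U.isALC) : ∀ d ∈ subs U, d.isALC := by
  induction U with
  | top => intro d hd; simp [subs] at hd; subst hd; trivial
  | atom A => intro d hd; simp [subs] at hd; subst hd; trivial
  | neg c ih =>
      intro d hd
      rcases Finset.mem_insert.mp hd with h | h
      · subst h; exact hU
      · exact ih hU d h
  | conj c e ihc ihe =>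
      intro d hd
      rcases Finset.mem_insert.mp hd with h | h
      · subst h; exact hU
      · rcases Finset.mem_union.mp h with h | h
        · exact ihc hU.1 d h
        · exact ihe hU.2 d h
  | atLeast n r c ih =>
      intro d hd
      rcases Finset.mem_insert.mp hd with h | h
      · subst h; exact hU
      · exact ih hU.2 d h

lemma subs_inSig {σ : Sig Cn Rn} {U : Concept Cn Rn} (hU : U.inSig σ) :
    ∀ d ∈ subs U, d.inSig σ := by
  induction U with
  | top => intro d hd; simp [subs] at hd; subst hd; trivial
  | atom A => intro d hd; simp [subs] at hd; subst hd; exact hU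
  | neg c ih =>
      intro d hd
      rcases Finset.mem_insert.mp hd with h | h
      · subst h; exact hU
      · exact ih hU d h
  | conj c e ihc ihe =>
      intro d hd
      rcases Finset.mem_insert.mp hd with h | h
      · subst h; exact hU
      · rcases Finset.mem_union.mp h with h | h
        · exact ihc hU.1 d h
        · exact ihe hU.2 d h
  | atLeast n r c ih =>
      intro d hd
      rcases Finset.mem_insert.mp hd with h | h
      · subst h; exact hU
      · exact ih hU.2 d h

end Aux2
section Trees

/-- symmetric trees of depth ≤ j, up to bisimulation -/
def Tree : ℕ → Type
  | 0 => Unit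
  | j + 1 => Tree j → Bool

def treeInst : ∀ j, Fintype (Tree j) × DecidableEq (Tree j)
  | 0 => ⟨inferInstanceAs (Fintype Unit), inferInstanceAs (DecidableEq Unit)⟩
  | j + 1 =>
    letI F := (treeInst j).1
    letI D := (treeInst j).2
    ⟨inferInstanceAs (Fintype (Tree j → Bool)), inferInstanceAs (DecidableEq (Tree j → Bool))⟩

instance instTreeFintype (j : ℕ) : Fintype (Tree j) := (treeInst j).1
instance instTreeDecEq (j : ℕ) : DecidableEq (Tree j) := (treeInst j).2

lemma card_tree : ∀ j, Fintype.card (Tree j) = Tower j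
  | 0 => by
      rw [show Fintype.card (Tree 0) = Fintype.card Unit from Fintype.card_congr (Equiv.refl _)]
      simp [Tower]
  | j + 1 => by
      rw [show Fintype.card (Tree (j+1)) = Fintype.card (Tree j → Bool) from
        Fintype.card_congr (Equiv.refl _)]
      rw [Fintype.card_fun]
      rw [card_tree j]
      simp [Tower]

noncomputable def treeList (j : ℕ) : List (Tree j) := (Finset.univ : Finset (Tree j)).toList

lemma mem_treeList {j : ℕ} (u : Tree j) : u ∈ treeList j := by simp [treeList]

/-- the domain of the big tree model -/
abbrev P := Σ j, Tree j

/-- edge relation between trees: from a level-(j+1) tree to its selected level-j subtrees -/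
def tEdge : P → P → Prop
  | ⟨0, _⟩, _ => False
  | ⟨j + 1, a⟩, ⟨j', b⟩ => ∃ h : j' = j, a (h ▸ b) = true

lemma tEdge_succ {j : ℕ} (a : Tree (j+1)) (b : Tree j) :
    tEdge ⟨j+1, a⟩ ⟨j, b⟩ ↔ a b = true := by
  constructor
  · rintro ⟨h, hb⟩; exact hb
  · intro hb; exact ⟨rfl, hb⟩

/-- the base model: only the trees -/
abbrev Mbase : Interp ℕ (Fin 3) where
  Dom := P
  atomI := fun _ => ∅
  roleI := fun r => if r = 0 then ∅ else {p | tEdge p.1 p.2}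

lemma Mbase_edge {r : Fin 3} (hr : r ≠ 0) {p q : P} :
    ((p, q) ∈ Mbase.roleI r) ↔ tEdge p q := by
  simp [Mbase, hr]

end Trees
section Chi
open Concept

/-- characteristic concept of a tree, at role 1 (=s) -/
noncomputable def χ : (j : ℕ) → Tree j → Concept ℕ (Fin 3)
  | 0, _ => .top
  | j + 1, t =>
      .conj (bigConj (((treeList j).filter (fun u => t u)).map (fun u => Concept.ex 1 (χ j u))))
            (Concept.all 1 (bigDisj (((treeList j).filter (fun u => t u)).map (fun u => χ j u))))

lemma χ_zero (t : Tree 0) : χ 0 t = Concept.top := by rw [χ]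

lemma χ_succ (j : ℕ) (t : Tree (j+1)) : χ (j+1) t =
    .conj (bigConj (((treeList j).filter (fun u => t u)).map (fun u => Concept.ex 1 (χ j u))))
          (Concept.all 1 (bigDisj (((treeList j).filter (fun u => t u)).map (fun u => χ j u)))) := by
  rw [χ]

lemma tree0_eq (u t : Tree 0) : u = t := @Subsingleton.elim Unit _ u t

lemma bigConj_isALC {l : List (Concept ℕ (Fin 3))} (h : ∀ c ∈ l, c.isALC) :
    (bigConj l).isALC := by
  induction l with
  | nil => trivial
  | cons c l ih =>
      exact ⟨h c (by simp), ih fun d hd => h d (by simp [hd])⟩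

lemma bigConj_inSig {σ : Sig ℕ (Fin 3)} {l : List (Concept ℕ (Fin 3))}
    (h : ∀ c ∈ l, c.inSig σ) : (bigConj l).inSig σ := by
  induction l with
  | nil => trivial
  | cons c l ih =>
      exact ⟨h c (by simp), ih fun d hd => h d (by simp [hd])⟩

lemma bigConj_depth {k : ℕ} {l : List (Concept ℕ (Fin 3))}
    (h : ∀ c ∈ l, c.roleDepth ≤ k) : (bigConj l).roleDepth ≤ k := by
  induction l with
  | nil => simp [bigConj, Concept.roleDepth]
  | cons c l ih =>
      have h1 := h c (by simp)
      have h2 := ih fun d hd => h d (by simp [hd])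
      simp only [bigConj, Concept.roleDepth]
      omega

lemma bigDisj_isALC {l : List (Concept ℕ (Fin 3))} (h : ∀ c ∈ l, c.isALC) :
    (bigDisj l).isALC := by
  show (bigConj (l.map Concept.neg)).isALC
  exact bigConj_isALC (by rintro c hc; obtain ⟨d, hd, rfl⟩ := List.mem_map.mp hc; exact h d hd)

lemma bigDisj_inSig {σ : Sig ℕ (Fin 3)} {l : List (Concept ℕ (Fin 3))}
    (h : ∀ c ∈ l, c.inSig σ) : (bigDisj l).inSig σ := by
  show (bigConj (l.map Concept.neg)).inSig σ
  exact bigConj_inSig (by rintro c hc; obtain ⟨d, hd, rfl⟩ := List.mem_map.mp hc; exact h d hd)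

lemma bigDisj_depth {k : ℕ} {l : List (Concept ℕ (Fin 3))}
    (h : ∀ c ∈ l, c.roleDepth ≤ k) : (bigDisj l).roleDepth ≤ k := by
  show (bigConj (l.map Concept.neg)).roleDepth ≤ k
  exact bigConj_depth (by rintro c hc; obtain ⟨d, hd, rfl⟩ := List.mem_map.mp hc; exact h d hd)

lemma χ_isALC : ∀ (j : ℕ) (t : Tree j), (χ j t).isALC
  | 0, _ => trivial
  | j + 1, t => by
      refine ⟨bigConj_isALC ?_, ⟨rfl, bigDisj_isALC ?_⟩⟩
      · rintro c hc
        obtain ⟨u, _, rfl⟩ := List.mem_map.mp hc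
        exact ⟨rfl, χ_isALC j u⟩
      · rintro c hc
        obtain ⟨u, _, rfl⟩ := List.mem_map.mp hc
        exact χ_isALC j u

lemma χ_inSig : ∀ (j : ℕ) (t : Tree j), (χ j t).inSig σ11
  | 0, _ => trivial
  | j + 1, t => by
      have h1 : (1 : Fin 3) ∈ σ11.rs := by simp [σ11]
      refine ⟨bigConj_inSig ?_, ⟨h1, bigDisj_inSig ?_⟩⟩
      · rintro c hc
        obtain ⟨u, _, rfl⟩ := List.mem_map.mp hc
        exact ⟨h1, χ_inSig j u⟩
      · rintro c hc
        obtain ⟨u, _, rfl⟩ := List.mem_map.mp hc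
        exact χ_inSig j u

lemma χ_depth : ∀ (j : ℕ) (t : Tree j), (χ j t).roleDepth ≤ j
  | 0, _ => by simp [χ, Concept.roleDepth]
  | j + 1, t => by
      have h1 : (bigConj (((treeList j).filter (fun u => t u)).map
          (fun u => Concept.ex 1 (χ j u)))).roleDepth ≤ j + 1 := by
        refine bigConj_depth ?_
        rintro c hc
        obtain ⟨u, _, rfl⟩ := List.mem_map.mp hc
        have := χ_depth j u
        simp only [Concept.ex, Concept.roleDepth]
        omega
      have h2 : (bigDisj (((treeList j).filter (fun u => t u)).map
          (fun u => χ j u))).roleDepth ≤ j := by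
        refine bigDisj_depth ?_
        rintro c hc
        obtain ⟨u, _, rfl⟩ := List.mem_map.mp hc
        exact χ_depth j u
      rw [χ_succ]
      have e1 : (Concept.all (1 : Fin 3) (bigDisj (((treeList j).filter (fun u => t u)).map
          (fun u => χ j u)))).roleDepth = (bigDisj (((treeList j).filter (fun u => t u)).map
          (fun u => χ j u))).roleDepth + 1 := rfl
      have h2' : (bigConj ((((treeList j).filter (fun u => t u)).map
          (fun u => χ j u)).map Concept.neg)).roleDepth ≤ j := h2
      simp only [Concept.roleDepth]
      omega

lemma χ_sem : ∀ (j : ℕ) (u t : Tree j), ((⟨j, u⟩ : P) ∈ (χ j t).sem Mbase) ↔ u = t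
  | 0, u, t => by
      rw [χ_zero]
      simp only [Concept.sem, Set.mem_univ, true_iff]
      exact tree0_eq u t
  | j + 1, u, t => by
      have hedge : ∀ (e : P), ((⟨j+1, u⟩ : P), e) ∈ Mbase.roleI 1 ↔
          ∃ w : Tree j, e = ⟨j, w⟩ ∧ u w = true := by
        rintro ⟨j', w⟩
        rw [Mbase_edge (by decide)]
        constructor
        · rintro ⟨h, hw⟩; subst h; exact ⟨w, rfl, hw⟩
        · rintro ⟨w', hw', hb⟩
          rw [hw']
          exact (tEdge_succ u w').mpr hb
      rw [χ_succ]
      show (⟨j+1, u⟩ : P) ∈ _ ∩ _ ↔ _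
      rw [Set.mem_inter_iff, sem_bigConj, sem_all]
      constructor
      · rintro ⟨h1, h2⟩
        funext w
        have fwd : u w = true → t w = true := by
          intro huw
          have h3 := h2 ⟨j, w⟩ ((hedge _).mpr ⟨w, rfl, huw⟩)
          rw [sem_bigDisj] at h3
          obtain ⟨c, hc, hsem⟩ := h3
          obtain ⟨v, hv, rfl⟩ := List.mem_map.mp hc
          have hv2 : t v = true := List.of_mem_filter hv
          have := (χ_sem j w v).mp hsem
          subst this
          exact hv2
        have bwd : t w = true → u w = true := by
          intro htw
          have hc : Concept.ex 1 (χ j w) ∈ ((treeList j).filter (fun v => t v)).map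
              (fun v => Concept.ex 1 (χ j v)) :=
            List.mem_map.mpr ⟨w, List.mem_filter.mpr ⟨mem_treeList w, htw⟩, rfl⟩
          have h3 := h1 _ hc
          rw [show Concept.ex (1 : Fin 3) (χ j w) = Concept.atLeast 1 1 (χ j w) from rfl,
            sem_ex] at h3
          obtain ⟨e, he, hsem⟩ := h3
          obtain ⟨w', rfl, hw'⟩ := (hedge e).mp he
          have := (χ_sem j w' w).mp hsem
          subst this
          exact hw'
        cases h : u w <;> cases h' : t w <;> simp_all
      · rintro rfl
        refine ⟨?_, ?_⟩
        · rintro c hc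
          obtain ⟨v, hv, rfl⟩ := List.mem_map.mp hc
          have hv2 : u v = true := List.of_mem_filter hv
          rw [show Concept.ex (1 : Fin 3) (χ j v) = Concept.atLeast 1 1 (χ j v) from rfl, sem_ex]
          exact ⟨⟨j, v⟩, (hedge _).mpr ⟨v, rfl, hv2⟩, (χ_sem j v v).mpr rfl⟩
        · rintro e he
          obtain ⟨w, rfl, hw⟩ := (hedge e).mp he
          rw [sem_bigDisj]
          exact ⟨χ j w, List.mem_map.mpr ⟨w, List.mem_filter.mpr ⟨mem_treeList w, hw⟩, rfl⟩,
            (χ_sem j w w).mpr rfl⟩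

end Chi
section Models
open Concept

variable (ℓ : ℕ) (T T' : Tree ℓ)

/-- tree node as element of the full model domain -/
def yN (j : ℕ) (t : Tree j) : Bool ⊕ P := Sum.inr ⟨j, t⟩

/-- full model: trees plus two roots. inl false = root₀ (r,s,s' to T);
inl true = root₁ (s to T, s' to T'). -/
abbrev Mfull : Interp ℕ (Fin 3) where
  Dom := Bool ⊕ P
  atomI := fun _ => ∅
  roleI := fun r =>
    if r = 0 then {p | p = (Sum.inl false, yN ℓ T)}
    else if r = 1 then
      {p | p = (Sum.inl false, yN ℓ T) ∨ p = (Sum.inl true, yN ℓ T) ∨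
        ∃ a b : P, tEdge a b ∧ p = (Sum.inr a, Sum.inr b)}
    else
      {p | p = (Sum.inl false, yN ℓ T) ∨ p = (Sum.inl true, yN ℓ T') ∨
        ∃ a b : P, tEdge a b ∧ p = (Sum.inr a, Sum.inr b)}

lemma Mfull_role0 : (Mfull ℓ T T').roleI 0 = {p | p = (Sum.inl false, yN ℓ T)} := rfl

lemma Mfull_role1 : (Mfull ℓ T T').roleI 1 =
    {p | p = (Sum.inl false, yN ℓ T) ∨ p = (Sum.inl true, yN ℓ T) ∨
      ∃ a b : P, tEdge a b ∧ p = (Sum.inr a, Sum.inr b)} := rfl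

lemma Mfull_role2 : (Mfull ℓ T T').roleI 2 =
    {p | p = (Sum.inl false, yN ℓ T) ∨ p = (Sum.inl true, yN ℓ T') ∨
      ∃ a b : P, tEdge a b ∧ p = (Sum.inr a, Sum.inr b)} := rfl

lemma Mfull_isModel : (Mfull ℓ T T').isModel O11 := by
  constructor
  · rintro p hp
    simp only [O11, Set.mem_empty_iff_false] at hp
  · rintro p hp
    simp only [O11, Set.mem_insert_iff, Set.mem_singleton_iff] at hp
    rcases hp with rfl | rfl
    · rintro q hq
      have hq' : q = (Sum.inl false, yN ℓ T) := hq
      subst hq'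
      show _ ∈ (Mfull ℓ T T').roleI 1
      rw [Mfull_role1]
      exact Or.inl rfl
    · rintro q hq
      have hq' : q = (Sum.inl false, yN ℓ T) := hq
      subst hq'
      show _ ∈ (Mfull ℓ T T').roleI 2
      rw [Mfull_role2]
      exact Or.inl rfl

lemma Mfull_inr_edge {r : Fin 3} {p : P} {e : Bool ⊕ P} :
    ((Sum.inr p, e) ∈ (Mfull ℓ T T').roleI r) ↔ (r ≠ 0 ∧ ∃ b : P, e = Sum.inr b ∧ tEdge p b) := by
  by_cases hr : r = 0
  · subst hr
    rw [Mfull_role0]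
    simp only [Set.mem_setOf_eq, Prod.mk.injEq, ne_eq, not_true_eq_false, false_and, iff_false]
    rintro ⟨h, _⟩
    simp at h
  · have main : ∀ z : Bool ⊕ P,
        (((Sum.inr p, e) = ((Sum.inl false : Bool ⊕ P), yN ℓ T) ∨
          (Sum.inr p, e) = ((Sum.inl true : Bool ⊕ P), z) ∨
          ∃ a b : P, tEdge a b ∧ ((Sum.inr p : Bool ⊕ P), e) = (Sum.inr a, Sum.inr b))
          ↔ ∃ b : P, e = Sum.inr b ∧ tEdge p b) := by
      intro z
      constructor
      · rintro (h | h | ⟨a, b, hab, h⟩) <;> simp only [Prod.mk.injEq] at h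
        · exact absurd h.1 (by simp)
        · exact absurd h.1 (by simp)
        · cases Sum.inr_injective h.1
          exact ⟨b, h.2, hab⟩
      · rintro ⟨b, rfl, hb⟩
        exact Or.inr (Or.inr ⟨p, b, hb, rfl⟩)
    by_cases hr1 : r = 1
    · subst hr1
      rw [Mfull_role1]
      rw [Set.mem_setOf_eq]
      rw [main (yN ℓ T)]
      simp
    · have hr2 : r = 2 := by omega
      subst hr2
      rw [Mfull_role2]
      rw [Set.mem_setOf_eq]
      rw [main (yN ℓ T')]
      simp

lemma Mfull_root0_edge {r : Fin 3} {e : Bool ⊕ P} :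
    ((Sum.inl false, e) ∈ (Mfull ℓ T T').roleI r) ↔ e = yN ℓ T := by
  have main : ∀ z : Bool ⊕ P,
      (((Sum.inl false, e) = ((Sum.inl false : Bool ⊕ P), yN ℓ T) ∨
        (Sum.inl false, e) = ((Sum.inl true : Bool ⊕ P), z) ∨
        ∃ a b : P, tEdge a b ∧ ((Sum.inl false : Bool ⊕ P), e) = (Sum.inr a, Sum.inr b))
        ↔ e = yN ℓ T) := by
    intro z
    constructor
    · rintro (h | h | ⟨a, b, _, h⟩) <;> simp only [Prod.mk.injEq] at h
      · exact h.2
      · exact absurd h.1 (by simp)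
      · exact absurd h.1 (by simp)
    · rintro rfl; exact Or.inl rfl
  by_cases hr : r = 0
  · subst hr
    rw [Mfull_role0]
    simp only [Set.mem_setOf_eq, Prod.mk.injEq, true_and]
  · by_cases hr1 : r = 1
    · subst hr1
      rw [Mfull_role1, Set.mem_setOf_eq]
      exact main (yN ℓ T)
    · have hr2 : r = 2 := by omega
      subst hr2
      rw [Mfull_role2, Set.mem_setOf_eq]
      exact main (yN ℓ T')

lemma Mfull_root1_edge1 {e : Bool ⊕ P} :
    ((Sum.inl true, e) ∈ (Mfull ℓ T T').roleI 1) ↔ e = yN ℓ T := by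
  rw [Mfull_role1, Set.mem_setOf_eq]
  constructor
  · rintro (h | h | ⟨a, b, _, h⟩) <;> simp only [Prod.mk.injEq] at h
    · exact absurd h.1 (by simp)
    · exact h.2
    · exact absurd h.1 (by simp)
  · rintro rfl; exact Or.inr (Or.inl rfl)

lemma Mfull_root1_edge2 {e : Bool ⊕ P} :
    ((Sum.inl true, e) ∈ (Mfull ℓ T T').roleI 2) ↔ e = yN ℓ T' := by
  rw [Mfull_role2, Set.mem_setOf_eq]
  constructor
  · rintro (h | h | ⟨a, b, _, h⟩) <;> simp only [Prod.mk.injEq] at h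
    · exact absurd h.1 (by simp)
    · exact h.2
    · exact absurd h.1 (by simp)
  · rintro rfl; exact Or.inr (Or.inl rfl)

/-- truth of ALC concepts at tree nodes is the same in Mfull and Mbase -/
lemma transfer : ∀ (D : Concept ℕ (Fin 3)), D.isALC →
    ∀ p : P, (Sum.inr p ∈ D.sem (Mfull ℓ T T') ↔ p ∈ D.sem Mbase) := by
  intro D
  induction D with
  | top => intro _ p; simp [Concept.sem]
  | atom A => intro _ p; simp [Concept.sem, Mfull, Mbase]
  | neg c ih =>
      intro h p
      simp only [Concept.sem, Set.mem_compl_iff]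
      rw [ih h p]
  | conj c d ihc ihd =>
      intro h p
      simp only [Concept.sem, Set.mem_inter_iff]
      rw [ihc h.1 p, ihd h.2 p]
  | atLeast m r c ih =>
      rintro ⟨rfl, hc⟩ p
      rw [sem_ex, sem_ex]
      constructor
      · rintro ⟨e, he, hsem⟩
        obtain ⟨hr, b, rfl, hb⟩ := (Mfull_inr_edge ℓ T T').mp he
        exact ⟨b, (Mbase_edge hr).mpr hb, (ih hc b).mp hsem⟩
      · rintro ⟨q, hq, hsem⟩
        by_cases hr : r = 0
        · subst hr; simp [Mbase] at hq
        · rw [Mbase_edge hr] at hq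
          exact ⟨Sum.inr q, (Mfull_inr_edge ℓ T T').mpr ⟨hr, q, rfl, hq⟩,
            (ih hc q).mpr hsem⟩

/-- if T and T' satisfy the same subconcepts of U (in Mbase), then
root₁ satisfies any subconcept of U iff root₀ does. -/
lemma root_transfer {U : Concept ℕ (Fin 3)} (hALC : U.isALC) (hSig : U.inSig σ11)
    (H : ∀ D ∈ subs U, ((⟨ℓ, T⟩ : P) ∈ D.sem Mbase ↔ (⟨ℓ, T'⟩ : P) ∈ D.sem Mbase)) :
    ∀ D ∈ subs U,
      ((Sum.inl true : Bool ⊕ P) ∈ D.sem (Mfull ℓ T T') ↔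
       (Sum.inl false : Bool ⊕ P) ∈ D.sem (Mfull ℓ T T')) := by
  intro D
  induction D with
  | top => intro _; simp [Concept.sem]
  | atom A => intro _; simp [Concept.sem, Mfull]
  | neg c ih =>
      intro hmem
      simp only [Concept.sem, Set.mem_compl_iff]
      rw [ih (mem_subs_neg hmem)]
  | conj c d ihc ihd =>
      intro hmem
      simp only [Concept.sem, Set.mem_inter_iff]
      rw [ihc (mem_subs_conj hmem).1, ihd (mem_subs_conj hmem).2]
  | atLeast m r c ih =>
      intro hmem
      obtain ⟨rfl, hcALC⟩ := subs_isALC hALC _ hmem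
      obtain ⟨hrSig, hcSig⟩ := subs_inSig hSig _ hmem
      have hcmem := mem_subs_atLeast hmem
      have hr : r = 1 ∨ r = 2 := by
        simp only [σ11, Set.mem_insert_iff, Set.mem_singleton_iff] at hrSig
        exact hrSig
      rw [sem_ex, sem_ex]
      rcases hr with rfl | rfl
      · constructor
        · rintro ⟨e, he, hsem⟩
          rw [Mfull_root1_edge1] at he
          subst he
          exact ⟨yN ℓ T, (Mfull_root0_edge ℓ T T').mpr rfl, hsem⟩
        · rintro ⟨e, he, hsem⟩
          rw [Mfull_root0_edge] at he
          subst he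
          exact ⟨yN ℓ T, (Mfull_root1_edge1 ℓ T T').mpr rfl, hsem⟩
      · have key : (yN ℓ T ∈ c.sem (Mfull ℓ T T')) ↔ (yN ℓ T' ∈ c.sem (Mfull ℓ T T')) := by
          rw [show yN ℓ T = Sum.inr ⟨ℓ, T⟩ from rfl, show yN ℓ T' = Sum.inr ⟨ℓ, T'⟩ from rfl,
            transfer ℓ T T' c hcALC, transfer ℓ T T' c hcALC]
          exact H c hcmem
        constructor
        · rintro ⟨e, he, hsem⟩
          rw [Mfull_root1_edge2] at he
          subst he
          exact ⟨yN ℓ T, (Mfull_root0_edge ℓ T T').mpr rfl, key.mpr hsem⟩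
        · rintro ⟨e, he, hsem⟩
          rw [Mfull_root0_edge] at he
          subst he
          exact ⟨yN ℓ T', (Mfull_root1_edge2 ℓ T T').mpr rfl, key.mp hsem⟩

/-- c₀ entails ∃s.C ⊔ ∃s'.¬C for any concept C -/
lemma c0_entails_EC (C : Concept ℕ (Fin 3)) :
    entails O11 (Concept.ex 0 Concept.top)
      (Concept.disj (Concept.ex 1 C) (Concept.ex 2 (Concept.neg C))) := by
  intro I hI x hx
  rw [show Concept.ex (0 : Fin 3) Concept.top = Concept.atLeast 1 0 Concept.top from rfl,
    sem_ex] at hx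
  obtain ⟨y, hy, _⟩ := hx
  have h1 : (x, y) ∈ I.roleI 1 := hI.2 (0, 1) (by simp [O11]) hy
  have h2 : (x, y) ∈ I.roleI 2 := hI.2 (0, 2) (by simp [O11]) hy
  rw [sem_disj]
  by_cases hC : y ∈ C.sem I
  · exact Or.inl (sem_ex.mpr ⟨y, h1, hC⟩)
  · exact Or.inr (sem_ex.mpr ⟨y, h2, hC⟩)

end Models

/-- Theorem 2: every (Σ,n)-uniform interpolant of ∃r.⊤ under {r ⊑ s, r ⊑ s'}
has size at least Tower(n−2) for n ≥ 2. -/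
theorem uniform_interpolant_lower_bound (n : ℕ) (hn : 2 ≤ n) (U : Concept ℕ (Fin 3))
    (hU : UniformInterpolant O11 σ11 (Concept.ex 0 Concept.top) n U) :
    Tower (n - 2) ≤ U.size := by
  classical
  by_contra hcon
  push_neg at hcon
  obtain ⟨hALC, hSig, hEnt, hMax⟩ := hU
  -- pigeonhole: two distinct trees satisfying the same subconcepts of U
  have hmaps : ∀ t ∈ (Finset.univ : Finset (Tree (n-1))),
      (subs U).filter (fun D => (⟨n-1, t⟩ : P) ∈ D.sem Mbase) ∈ (subs U).powerset :=
    fun t _ => Finset.mem_powerset.mpr (Finset.filter_subset _ _)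
  have hcard : ((subs U).powerset).card < (Finset.univ : Finset (Tree (n-1))).card := by
    rw [Finset.card_powerset, Finset.card_univ, card_tree,
      show n - 1 = (n - 2) + 1 from by omega]
    calc 2 ^ (subs U).card < 2 ^ Tower (n - 2) := by
          have h1 : (subs U).card ≤ U.size := card_subs_le U
          exact Nat.pow_lt_pow_right (by norm_num) (by omega)
      _ = Tower ((n - 2) + 1) := by simp [Tower]
  obtain ⟨T, _, T', _, hTT', hfTT'⟩ :=
    Finset.exists_ne_map_eq_of_card_lt_of_maps_to hcard hmaps
  have H : ∀ D ∈ subs U, ((⟨n-1, T⟩ : P) ∈ D.sem Mbase ↔ (⟨n-1, T'⟩ : P) ∈ D.sem Mbase) := by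
    intro D hD
    constructor
    · intro h
      have h2 : D ∈ (subs U).filter (fun D => (⟨n-1, T'⟩ : P) ∈ D.sem Mbase) := by
        rw [← hfTT']
        exact Finset.mem_filter.mpr ⟨hD, h⟩
      exact (Finset.mem_filter.mp h2).2
    · intro h
      have h2 : D ∈ (subs U).filter (fun D => (⟨n-1, T⟩ : P) ∈ D.sem Mbase) := by
        rw [hfTT']
        exact Finset.mem_filter.mpr ⟨hD, h⟩
      exact (Finset.mem_filter.mp h2).2
  -- the model
  have hM := Mfull_isModel (n-1) T T'
  have hroot0c0 : (Sum.inl false : Bool ⊕ P) ∈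
      (Concept.ex 0 Concept.top).sem (Mfull (n-1) T T') := by
    rw [show Concept.ex (0 : Fin 3) Concept.top = Concept.atLeast 1 0 Concept.top from rfl,
      sem_ex]
    exact ⟨yN (n-1) T, (Mfull_root0_edge (n-1) T T').mpr rfl, by simp [Concept.sem]⟩
  have hroot0U : (Sum.inl false : Bool ⊕ P) ∈ U.sem (Mfull (n-1) T T') :=
    hEnt (Mfull (n-1) T T') hM hroot0c0
  have hroot1U : (Sum.inl true : Bool ⊕ P) ∈ U.sem (Mfull (n-1) T T') :=
    (root_transfer (n-1) T T' hALC hSig H U (self_mem_subs U)).mpr hroot0U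
  -- the separating consequence E = ∃s.χ(T') ⊔ ∃s'.¬χ(T')
  have hEALC : (Concept.disj (Concept.ex 1 (χ (n-1) T'))
      (Concept.ex 2 (Concept.neg (χ (n-1) T')))).isALC := by
    simp only [Concept.disj, Concept.ex, Concept.isALC]
    exact ⟨⟨by trivial, χ_isALC (n-1) T'⟩, by trivial, χ_isALC (n-1) T'⟩
  have hESig : (Concept.disj (Concept.ex 1 (χ (n-1) T'))
      (Concept.ex 2 (Concept.neg (χ (n-1) T')))).inSig σ11 := by
    simp only [Concept.disj, Concept.ex, Concept.inSig]
    exact ⟨⟨by simp [σ11], χ_inSig (n-1) T'⟩, by simp [σ11], χ_inSig (n-1) T'⟩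
  have hEdepth : (Concept.disj (Concept.ex 1 (χ (n-1) T'))
      (Concept.ex 2 (Concept.neg (χ (n-1) T')))).roleDepth ≤ n := by
    have := χ_depth (n-1) T'
    simp only [Concept.disj, Concept.ex, Concept.roleDepth]
    omega
  have hUE : entails O11 U (Concept.disj (Concept.ex 1 (χ (n-1) T'))
      (Concept.ex 2 (Concept.neg (χ (n-1) T')))) :=
    hMax _ hEALC hESig hEdepth (c0_entails_EC (χ (n-1) T'))
  have hroot1E := hUE (Mfull (n-1) T T') hM hroot1U
  rw [sem_disj] at hroot1E
  rcases hroot1E with h | h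
  · rw [show Concept.ex (1 : Fin 3) (χ (n-1) T') = Concept.atLeast 1 1 (χ (n-1) T') from rfl,
      sem_ex] at h
    obtain ⟨e, he, hsem⟩ := h
    rw [Mfull_root1_edge1] at he
    subst he
    rw [show yN (n-1) T = Sum.inr ⟨n-1, T⟩ from rfl,
      transfer (n-1) T T' (χ (n-1) T') (χ_isALC (n-1) T')] at hsem
    exact hTT' ((χ_sem (n-1) T T').mp hsem)
  · rw [show Concept.ex (2 : Fin 3) (Concept.neg (χ (n-1) T')) =
      Concept.atLeast 1 2 (Concept.neg (χ (n-1) T')) from rfl, sem_ex] at h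
    obtain ⟨e, he, hsem⟩ := h
    rw [Mfull_root1_edge2] at he
    subst he
    simp only [Concept.sem, Set.mem_compl_iff] at hsem
    rw [show yN (n-1) T' = Sum.inr ⟨n-1, T'⟩ from rfl,
      transfer (n-1) T T' (χ (n-1) T') (χ_isALC (n-1) T')] at hsem
    exact hsem ((χ_sem (n-1) T' T').mpr rfl)
end DL
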